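/- arXiv:1202.1126 — 4 statements merged into one kernel-verified Lean document; each statement's English description precedes it below -/
import Mathlib

section
/- For fixed n̄ > 0, the function L(η, n̄) defined by L(η, n̄) = g(η·n̄) − g((1−η)·n̄) for η ∈ (1/2, 1] and L(η, n̄) = 0 for η ∈ [0, 1/2], is convex in η on [0, 1]. -/
noncomputable def g (x : ℝ) : ℝ := (1 + x) * Real.log (1 + x) - x * Real.log x

noncomputable def L (η nbar : ℝ) : ℝ :=
  if 1 / 2 < η then g (η * nbar) - g ((1 - η) * nbar) else 0

open Real Set

lemma g_continuous : Continuous g := by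
  have h1 : Continuous fun x : ℝ => (1 + x) * Real.log (1 + x) :=
    Real.continuous_mul_log.comp (continuous_const.add continuous_id)
  exact h1.sub Real.continuous_mul_log

lemma g_hasDerivAt {x : ℝ} (hx : 0 < x) :
    HasDerivAt g (Real.log (1 + x) - Real.log x) x := by
  have h1 : HasDerivAt (fun y : ℝ => (1 + y) * Real.log (1 + y))
      ((Real.log (1 + x) + 1) * 1) x := by
    have := (Real.hasDerivAt_mul_log (x := 1 + x) (by positivity)).comp x
      ((hasDerivAt_id x).const_add 1)
    simpa [Function.comp_def] using this
  have h2 : HasDerivAt (fun y : ℝ => y * Real.log y) (Real.log x + 1) x :=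
    Real.hasDerivAt_mul_log hx.ne'
  have := h1.sub h2
  refine this.congr_deriv ?_
  ring

section aux
variable (nbar : ℝ)

noncomputable def fAux (η : ℝ) : ℝ := g (η * nbar) - g ((1 - η) * nbar)

noncomputable def fAux' (η : ℝ) : ℝ :=
  nbar * (Real.log (1 + η * nbar) - Real.log (η * nbar)) +
    nbar * (Real.log (1 + (1 - η) * nbar) - Real.log ((1 - η) * nbar))

end aux

lemma fAux_hasDerivAt {nbar η : ℝ} (h1 : 0 < η * nbar) (h2 : 0 < (1 - η) * nbar) :
    HasDerivAt (fAux nbar) (fAux' nbar η) η := by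
  have ha : HasDerivAt (fun t : ℝ => g (t * nbar))
      ((Real.log (1 + η * nbar) - Real.log (η * nbar)) * nbar) η :=
    (g_hasDerivAt h1).comp η (h := fun t : ℝ => t * nbar) (by simpa using (hasDerivAt_id η).mul_const nbar)
  have hb : HasDerivAt (fun t : ℝ => g ((1 - t) * nbar))
      ((Real.log (1 + (1 - η) * nbar) - Real.log ((1 - η) * nbar)) * (-nbar)) η := by
    have hlin : HasDerivAt (fun t : ℝ => (1 - t) * nbar) (-nbar) η := by
      have : HasDerivAt (fun t : ℝ => (1 - t) * nbar) ((-1) * nbar) η :=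
        (((hasDerivAt_id η).const_sub 1)).mul_const nbar
      simpa using this
    exact (g_hasDerivAt h2).comp η hlin
  have := ha.sub hb
  refine this.congr_deriv ?_
  unfold fAux'
  ring

lemma fAux'_hasDerivAt {nbar η : ℝ} (h1 : 0 < η * nbar) (h2 : 0 < (1 - η) * nbar) :
    HasDerivAt (fAux' nbar)
      (nbar * (nbar / (1 + η * nbar) - nbar / (η * nbar)) +
        nbar * (-nbar / (1 + (1 - η) * nbar) + nbar / ((1 - η) * nbar))) η := by
  have l1 : HasDerivAt (fun t : ℝ => Real.log (1 + t * nbar)) (nbar / (1 + η * nbar)) η := by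
    have hlin : HasDerivAt (fun t : ℝ => 1 + t * nbar) nbar η := by
      simpa using ((hasDerivAt_id η).mul_const nbar).const_add 1
    have := (Real.hasDerivAt_log (x := 1 + η * nbar) (by positivity)).comp η hlin
    simpa [div_eq_inv_mul, Function.comp_def] using this
  have l2 : HasDerivAt (fun t : ℝ => Real.log (t * nbar)) (nbar / (η * nbar)) η := by
    have hlin : HasDerivAt (fun t : ℝ => t * nbar) nbar η := by
      simpa using (hasDerivAt_id η).mul_const nbar
    have := (Real.hasDerivAt_log h1.ne').comp η hlin
    simpa [div_eq_inv_mul, Function.comp_def] using this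
  have l3 : HasDerivAt (fun t : ℝ => Real.log (1 + (1 - t) * nbar))
      (-nbar / (1 + (1 - η) * nbar)) η := by
    have hlin : HasDerivAt (fun t : ℝ => 1 + (1 - t) * nbar) (-nbar) η := by
      have : HasDerivAt (fun t : ℝ => 1 + (1 - t) * nbar) ((-1) * nbar) η :=
        (((hasDerivAt_id η).const_sub 1).mul_const nbar).const_add 1
      simpa using this
    have := (Real.hasDerivAt_log (x := 1 + (1 - η) * nbar) (by positivity)).comp η hlin
    simpa [div_eq_inv_mul, neg_div, mul_comm, Function.comp_def] using this
  have l4 : HasDerivAt (fun t : ℝ => Real.log ((1 - t) * nbar))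
      (-nbar / ((1 - η) * nbar)) η := by
    have hlin : HasDerivAt (fun t : ℝ => (1 - t) * nbar) (-nbar) η := by
      have : HasDerivAt (fun t : ℝ => (1 - t) * nbar) ((-1) * nbar) η :=
        ((hasDerivAt_id η).const_sub 1).mul_const nbar
      simpa using this
    have := (Real.hasDerivAt_log h2.ne').comp η hlin
    simpa [div_eq_inv_mul, neg_div, mul_comm, Function.comp_def] using this
  have := ((l1.sub l2).const_mul nbar).add ((l3.sub l4).const_mul nbar)
  refine this.congr_deriv ?_
  ring

lemma fAux_convexOn {nbar : ℝ} (hn : 0 < nbar) :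
    ConvexOn ℝ (Icc (1/2 : ℝ) 1) (fAux nbar) := by
  have hint : interior (Icc (1/2 : ℝ) 1) = Ioo (1/2 : ℝ) 1 := interior_Icc
  have hpos : ∀ η ∈ Ioo (1/2 : ℝ) 1, 0 < η * nbar ∧ 0 < (1 - η) * nbar := by
    rintro η ⟨hη1, hη2⟩
    constructor <;> nlinarith
  have hderiv : ∀ η ∈ Ioo (1/2 : ℝ) 1, HasDerivAt (fAux nbar) (fAux' nbar η) η :=
    fun η hη => fAux_hasDerivAt (hpos η hη).1 (hpos η hη).2
  have hderiv_eq : ∀ η ∈ Ioo (1/2 : ℝ) 1, deriv (fAux nbar) η = fAux' nbar η :=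
    fun η hη => (hderiv η hη).deriv
  have hEv : ∀ η ∈ Ioo (1/2 : ℝ) 1, deriv (fAux nbar) =ᶠ[nhds η] fAux' nbar := by
    intro η hη
    exact Filter.eventually_of_mem (isOpen_Ioo.mem_nhds hη) hderiv_eq
  refine convexOn_of_deriv2_nonneg (convex_Icc _ _)
    ((g_continuous.comp (continuous_id.mul continuous_const)).sub
      (g_continuous.comp ((continuous_const.sub continuous_id).mul continuous_const))).continuousOn
    ?_ ?_ ?_
  · rw [hint]
    exact fun η hη => ((hderiv η hη).differentiableAt).differentiableWithinAt
  · rw [hint]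
    intro η hη
    have := (fAux'_hasDerivAt (hpos η hη).1 (hpos η hη).2).differentiableAt
    exact ((this.congr_of_eventuallyEq (hEv η hη)).differentiableWithinAt)
  · rw [hint]
    intro η hη
    have e1 : deriv (deriv (fAux nbar)) η = deriv (fAux' nbar) η :=
      (hEv η hη).deriv_eq
    have e2 : deriv (fAux' nbar) η =
        nbar * (nbar / (1 + η * nbar) - nbar / (η * nbar)) +
          nbar * (-nbar / (1 + (1 - η) * nbar) + nbar / ((1 - η) * nbar)) :=
      (fAux'_hasDerivAt (hpos η hη).1 (hpos η hη).2).deriv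
    simp only [Function.iterate_succ, Function.iterate_zero, Function.comp_apply, id_eq]
    rw [e1, e2]
    set a := η * nbar with ha
    set b := (1 - η) * nbar with hb
    have hap : 0 < a := (hpos η hη).1
    have hbp : 0 < b := (hpos η hη).2
    have hba : b ≤ a := by
      rw [ha, hb]
      have := hη.1
      nlinarith
    have key : nbar * (nbar / (1 + a) - nbar / a) + nbar * (-nbar / (1 + b) + nbar / b)
        = nbar ^ 2 * ((a - b) / (a * b) - (a - b) / ((1 + a) * (1 + b))) := by
      field_simp
      ring
    rw [key]
    have h2 : (a - b) / ((1 + a) * (1 + b)) ≤ (a - b) / (a * b) := by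
      apply div_le_div_of_nonneg_left (by linarith) (by positivity)
      nlinarith
    have : (0:ℝ) ≤ (a - b) / (a * b) - (a - b) / ((1 + a) * (1 + b)) := by linarith
    positivity

lemma fAux_monotoneOn {nbar : ℝ} (hn : 0 < nbar) :
    MonotoneOn (fAux nbar) (Icc (1/2 : ℝ) 1) := by
  have hint : interior (Icc (1/2 : ℝ) 1) = Ioo (1/2 : ℝ) 1 := interior_Icc
  have hpos : ∀ η ∈ Ioo (1/2 : ℝ) 1, 0 < η * nbar ∧ 0 < (1 - η) * nbar := by
    rintro η ⟨hη1, hη2⟩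
    constructor <;> nlinarith
  refine monotoneOn_of_deriv_nonneg (convex_Icc _ _)
    ((g_continuous.comp (continuous_id.mul continuous_const)).sub
      (g_continuous.comp ((continuous_const.sub continuous_id).mul continuous_const))).continuousOn
    ?_ ?_
  · rw [hint]
    exact fun η hη =>
      ((fAux_hasDerivAt (hpos η hη).1 (hpos η hη).2).differentiableAt).differentiableWithinAt
  · rw [hint]
    intro η hη
    rw [(fAux_hasDerivAt (hpos η hη).1 (hpos η hη).2).deriv]
    unfold fAux'
    have h1 := (hpos η hη).1
    have h2 := (hpos η hη).2
    have l1 : Real.log (η * nbar) < Real.log (1 + η * nbar) :=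
      Real.log_lt_log h1 (by linarith)
    have l2 : Real.log ((1 - η) * nbar) < Real.log (1 + (1 - η) * nbar) :=
      Real.log_lt_log h2 (by linarith)
    nlinarith

theorem L_convexOn (nbar : ℝ) (hn : 0 < nbar) :
    ConvexOn ℝ (Set.Icc (0 : ℝ) 1) (fun η => L η nbar) := by
  -- the inner function
  set m : ℝ → ℝ := fun η => max η (1/2) with hm
  have himg : m '' Icc (0:ℝ) 1 = Icc (1/2 : ℝ) 1 := by
    apply Subset.antisymm
    · rintro y ⟨x, ⟨hx0, hx1⟩, rfl⟩
      constructor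
      · exact le_max_right _ _
      · exact max_le hx1 (by norm_num)
    · rintro y ⟨hy1, hy2⟩
      exact ⟨y, ⟨by linarith, hy2⟩, max_eq_left hy1⟩
  have hconv : ConvexOn ℝ (Icc (0:ℝ) 1) m :=
    (convexOn_id (convex_Icc _ _)).sup (convexOn_const _ (convex_Icc _ _))
  have hcomp : ConvexOn ℝ (Icc (0:ℝ) 1) ((fAux nbar) ∘ m) := by
    refine ConvexOn.comp ?_ hconv ?_
    · rw [himg]; exact fAux_convexOn hn
    · rw [himg]; exact fAux_monotoneOn hn
  apply hcomp.congr
  intro η hη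
  simp only [Function.comp_apply]
  by_cases h : 1/2 < η
  · have : m η = η := max_eq_left h.le
    rw [this]
    unfold fAux L
    rw [if_pos h]
  · have : m η = 1/2 := max_eq_right (le_of_not_gt h)
    rw [this]
    simp only [L, h, if_false]
    unfold fAux
    norm_num
end

section
/- For every η ∈ (1/2, 1] and n̄ > 0, L(η, n̄) ≤ U(η, n̄), i.e., g(η n̄) − g((1−η) n̄) ≤ g((2η−1) n̄). -/
lemma g_zero : g 0 = 0 := by simp [g]

lemma g_concave : ConcaveOn ℝ (Set.Ici (0:ℝ)) g := by
  have hcont : Continuous g := by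
    have h1 : Continuous fun x : ℝ => (1 + x) * Real.log (1 + x) :=
      Real.continuous_mul_log.comp (continuous_const.add continuous_id)
    exact h1.sub Real.continuous_mul_log
  have hint : interior (Set.Ici (0:ℝ)) = Set.Ioi 0 := interior_Ici
  refine concaveOn_of_hasDerivWithinAt2_nonpos (convex_Ici 0) hcont.continuousOn
    (f' := fun x => Real.log (1 + x) - Real.log x)
    (f'' := fun x => 1 / (1 + x) - 1 / x) ?_ ?_ ?_
  · intro x hx
    rw [hint] at hx
    have hx0 : (0:ℝ) < x := hx
    have h1x : (1 + x) ≠ 0 := by positivity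
    have hd1 : HasDerivAt (fun y : ℝ => (1 + y) * Real.log (1 + y))
        (Real.log (1 + x) + 1) x := by
      have := (Real.hasDerivAt_mul_log h1x).comp x
        ((hasDerivAt_id x).const_add 1)
      simpa [Function.comp_def] using this
    have hd2 : HasDerivAt (fun y : ℝ => y * Real.log y) (Real.log x + 1) x :=
      Real.hasDerivAt_mul_log hx0.ne'
    have := (hd1.sub hd2)
    have h : HasDerivAt g (Real.log (1 + x) - Real.log x) x := by
      rw [show g = ((fun y : ℝ => (1 + y) * Real.log (1 + y)) - fun y : ℝ => y * Real.log y) from funext fun y => rfl]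
      simpa [g, sub_add_eq_sub_sub] using this.congr_deriv (by ring)
    exact h.hasDerivWithinAt
  · intro x hx
    rw [hint] at hx
    have hx0 : (0:ℝ) < x := hx
    have h1x : (0:ℝ) < 1 + x := by positivity
    have hd1 : HasDerivAt (fun y : ℝ => Real.log (1 + y)) (1 / (1 + x)) x := by
      have := (Real.hasDerivAt_log h1x.ne').comp x ((hasDerivAt_id x).const_add 1)
      simpa [one_div, Function.comp_def] using this
    have hd2 : HasDerivAt Real.log (1 / x) x := by
      simpa [one_div] using Real.hasDerivAt_log hx0.ne'
    exact (hd1.sub hd2).hasDerivWithinAt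
  · intro x hx
    rw [hint] at hx
    have hx0 : (0:ℝ) < x := hx
    have h1x : (0:ℝ) < 1 + x := by positivity
    have : 1 / (1 + x) ≤ 1 / x := by
      apply one_div_le_one_div_of_le hx0; linarith
    linarith

lemma g_subadd {b c : ℝ} (hb : 0 ≤ b) (hc : 0 ≤ c) : g (b + c) ≤ g b + g c := by
  rcases eq_or_lt_of_le (by positivity : (0:ℝ) ≤ b + c) with h | h
  · have hb0 : b = 0 := by linarith
    have hc0 : c = 0 := by linarith
    simp [hb0, hc0, g_zero]
  · have hbc : (0:ℝ) < b + c := h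
    have hmem1 : (b + c) ∈ Set.Ici (0:ℝ) := le_of_lt hbc
    have hmem0 : (0:ℝ) ∈ Set.Ici (0:ℝ) := Set.mem_Ici.mpr le_rfl
    have key : ∀ t : ℝ, 0 ≤ t → t ≤ b + c → (t / (b + c)) * g (b + c) ≤ g t := by
      intro t ht htle
      have ha : 0 ≤ t / (b + c) := by positivity
      have hb' : 0 ≤ 1 - t / (b + c) := by
        have : t / (b + c) ≤ 1 := by
          rw [div_le_one hbc]; exact htle
        linarith
      have hsum : t / (b + c) + (1 - t / (b + c)) = 1 := by ring
      have := g_concave.2 hmem1 hmem0 ha hb' hsum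
      have heq : (t / (b + c)) • (b + c) + (1 - t / (b + c)) • (0:ℝ) = t := by
        field_simp
        rw [smul_eq_mul, smul_zero, add_zero, div_mul_cancel₀ t hbc.ne']
      rw [heq] at this
      simpa [g_zero, smul_eq_mul] using this
    have h1 := key b hb (by linarith)
    have h2 := key c hc (by linarith)
    have hsum : b / (b + c) * g (b + c) + c / (b + c) * g (b + c) = g (b + c) := by
      field_simp
    linarith

theorem lower_le_upper (η nbar : ℝ) (hη : η ∈ Set.Ioc (1 / 2 : ℝ) 1) (hn : 0 < nbar) :
    g (η * nbar) - g ((1 - η) * nbar) ≤ g ((2 * η - 1) * nbar) := by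
  obtain ⟨h1, h2⟩ := hη
  have hb : 0 ≤ (1 - η) * nbar := by nlinarith
  have hc : 0 ≤ (2 * η - 1) * nbar := by nlinarith
  have := g_subadd hb hc
  have heq : (1 - η) * nbar + (2 * η - 1) * nbar = η * nbar := by ring
  rw [heq] at this
  linarith
end

section
/- For any η ∈ (1/2, 1) and n̄ > 0, the coefficient gap between the linear terms of the upper and lower asymptotic bounds is nonnegative: (2η−1)(1 + log(1/(2η−1))) ≥ η(1 + log(1/η)) − (1−η)(1 + log(1/(1−η))). -/
theorem coefficient_gap (η : ℝ) (hη : η ∈ Set.Ioo (1 / 2 : ℝ) 1) :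
    η * (1 + Real.log (1 / η)) - (1 - η) * (1 + Real.log (1 / (1 - η)))
      ≤ (2 * η - 1) * (1 + Real.log (1 / (2 * η - 1))) := by
  obtain ⟨h1, h2⟩ := hη
  have ha : 0 < 2 * η - 1 := by linarith
  have hb : 0 < 1 - η := by linarith
  have hs : 0 < η := by linarith
  rw [Real.log_div one_ne_zero hs.ne', Real.log_div one_ne_zero hb.ne',
      Real.log_div one_ne_zero ha.ne', Real.log_one]
  have l1 : Real.log (2 * η - 1) ≤ Real.log η := Real.log_le_log ha (by linarith)
  have l2 : Real.log (1 - η) ≤ Real.log η := Real.log_le_log hb (by linarith)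
  nlinarith [mul_le_mul_of_nonneg_left l1 ha.le, mul_le_mul_of_nonneg_left l2 hb.le]
end

section
/- For a random Hermitian matrix A = T† T with E[A] having diagonal entries μ⃗, and F symmetric convex on ℝ^m: E[F(h⃗(A))] ≥ E[F(d⃗(A))] ≥ F(μ⃗), where h⃗(A) are the eigenvalues and d⃗(A) the diagonal of A. -/
open Matrix MeasureTheory

noncomputable def topSum (m : ℕ) (a : Fin m → ℝ) (k : ℕ) : ℝ :=
  ∑ i ∈ Finset.univ.filter (fun i : Fin m => m - k ≤ (i : ℕ)), a (Tuple.sort a i)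

def Majorizes (m : ℕ) (a b : Fin m → ℝ) : Prop :=
  (∀ k ≤ m, topSum m b k ≤ topSum m a k) ∧ (∑ i, a i) = ∑ i, b i

/-- Schur–Horn + Schur convexity: for a Hermitian matrix, a symmetric convex function of
the (real parts of the) diagonal is at most its value at the eigenvalues. -/
lemma diag_le_eigenvalues {m : ℕ} (A : Matrix (Fin m) (Fin m) ℂ) (hA : A.IsHermitian)
    (F : (Fin m → ℝ) → ℝ)
    (hFsymm : ∀ (σ : Equiv.Perm (Fin m)) (x : Fin m → ℝ), F (x ∘ σ) = F x)
    (hFconvex : ConvexOn ℝ Set.univ F) :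
    F (fun i => (A i i).re) ≤ F hA.eigenvalues := by
  set U : Matrix (Fin m) (Fin m) ℂ := (hA.eigenvectorUnitary : Matrix (Fin m) (Fin m) ℂ) with hU
  set lam := hA.eigenvalues with hlam
  -- the doubly stochastic matrix of squared moduli
  set S : Matrix (Fin m) (Fin m) ℝ := fun i j => Complex.normSq (U i j) with hS
  have hUU : U * star U = 1 := (Matrix.mem_unitaryGroup_iff).mp hA.eigenvectorUnitary.2
  have hUU' : star U * U = 1 := (Matrix.mem_unitaryGroup_iff').mp hA.eigenvectorUnitary.2
  have hrow : ∀ i, ∑ j, S i j = 1 := by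
    intro i
    have := congrFun (congrFun hUU i) i
    simp only [Matrix.mul_apply, Matrix.one_apply_eq, Matrix.star_apply, RCLike.star_def] at this
    have := congrArg Complex.re this
    simpa [Complex.mul_conj, S] using this
  have hcol : ∀ j, ∑ i, S i j = 1 := by
    intro j
    have := congrFun (congrFun hUU' j) j
    simp only [Matrix.mul_apply, Matrix.one_apply_eq, Matrix.star_apply, RCLike.star_def] at this
    have := congrArg Complex.re this
    simpa [mul_comm, Complex.mul_conj, S] using this
  have hSmem : S ∈ doublyStochastic ℝ (Fin m) := by
    rw [mem_doublyStochastic_iff_sum]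
    exact ⟨fun i j => Complex.normSq_nonneg _, hrow, hcol⟩
  -- diagonal as S applied to eigenvalues
  have hdiag : ∀ i, (A i i).re = ∑ j, S i j * lam j := by
    intro i
    conv_lhs => rw [hA.spectral_theorem, Unitary.conjStarAlgAut_apply]
    simp only [Matrix.mul_apply, Matrix.diagonal_apply, Matrix.star_apply, RCLike.star_def,
      Function.comp_apply, mul_ite, mul_zero, Finset.sum_ite_eq', Finset.mem_univ, if_true]
    rw [Complex.re_sum]
    refine Finset.sum_congr rfl fun j _ => ?_
    have key : ∀ (z : ℂ) (r : ℝ), (z * (r : ℂ) * (starRingEnd ℂ) z).re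
        = Complex.normSq z * r := by
      intro z r
      rw [mul_comm z, mul_assoc, Complex.mul_conj, ← Complex.ofReal_mul, Complex.ofReal_re,
        mul_comm]
    exact key _ _
  -- Birkhoff decomposition
  obtain ⟨w, hw0, hw1, hwS⟩ := exists_eq_sum_perm_of_mem_doublyStochastic hSmem
  have hd_comb : (fun i => (A i i).re) = ∑ σ : Equiv.Perm (Fin m), w σ • (lam ∘ σ) := by
    funext i
    rw [hdiag i]
    have hSij : ∀ j, S i j = ∑ σ : Equiv.Perm (Fin m), w σ * (σ.permMatrix ℝ) i j := by
      intro j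
      rw [← hwS]
      simp only [Matrix.sum_apply, Matrix.smul_apply, smul_eq_mul]
    have hperm : ∀ (σ : Equiv.Perm (Fin m)) (j : Fin m),
        (σ.permMatrix ℝ) i j = if σ i = j then 1 else 0 := by
      intro σ j
      simp [Equiv.Perm.permMatrix, PEquiv.toMatrix_apply, Equiv.toPEquiv_apply]
    simp only [Finset.sum_apply, Pi.smul_apply, Function.comp_apply, smul_eq_mul]
    calc ∑ j, S i j * lam j
        = ∑ j, ∑ σ : Equiv.Perm (Fin m), w σ * (σ.permMatrix ℝ) i j * lam j := by
          refine Finset.sum_congr rfl fun j _ => ?_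
          rw [hSij j, Finset.sum_mul]
      _ = ∑ σ : Equiv.Perm (Fin m), ∑ j, w σ * (σ.permMatrix ℝ) i j * lam j :=
          Finset.sum_comm
      _ = ∑ σ : Equiv.Perm (Fin m), w σ * lam (σ i) := by
          refine Finset.sum_congr rfl fun σ _ => ?_
          simp [Equiv.Perm.permMatrix, PEquiv.toMatrix_apply, Equiv.toPEquiv_apply,
            mul_ite, ite_mul, Finset.sum_ite_eq]
  -- Jensen's finite inequality
  have := hFconvex.map_sum_le (t := Finset.univ) (w := w) (p := fun σ => lam ∘ σ)
    (fun σ _ => hw0 σ) (by simpa using hw1) (fun σ _ => Set.mem_univ _)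
  simp only [hFsymm] at this
  rw [hd_comb]
  calc F (∑ σ : Equiv.Perm (Fin m), w σ • (lam ∘ σ)) ≤ ∑ σ : Equiv.Perm (Fin m), w σ • F lam := this
    _ = F lam := by rw [← Finset.sum_smul, hw1, one_smul]

theorem random_matrix_bound (k m : ℕ)
    (Ω : Type*) [MeasureSpace Ω] [IsProbabilityMeasure (volume : Measure Ω)]
    (T : Ω → Matrix (Fin k) (Fin m) ℂ)
    -- the Hermitian matrix A(ω) = T(ω)ᴴ T(ω)
    (hA : ∀ ω, ((T ω)ᴴ * T ω).IsHermitian)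
    -- its eigenvalue and diagonal vectors
    (h : Ω → Fin m → ℝ) (d : Ω → Fin m → ℝ)
    (hh : ∀ ω, h ω = (hA ω).eigenvalues)
    (hd : ∀ ω, d ω = fun i => (((T ω)ᴴ * T ω) i i).re)
    -- the diagonal of E[A]
    (μ : Fin m → ℝ) (hμ : ∀ i, μ i = ∫ ω, d ω i)
    (F : (Fin m → ℝ) → ℝ)
    (hFsymm : ∀ (σ : Equiv.Perm (Fin m)) (x : Fin m → ℝ), F (x ∘ σ) = F x)
    (hFconvex : ConvexOn ℝ Set.univ F)
    -- integrability: all expectations exist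
    (hint_d : ∀ i, Integrable (fun ω => d ω i))
    (hint_Fh : Integrable (fun ω => F (h ω)))
    (hint_Fd : Integrable (fun ω => F (d ω))) :
    (∫ ω, F (d ω)) ≤ ∫ ω, F (h ω) ∧ F μ ≤ ∫ ω, F (d ω) := by
  constructor
  · -- pointwise Schur-Horn + integrate
    refine integral_mono hint_Fd hint_Fh fun ω => ?_
    rw [hd ω, hh ω]
    exact diag_le_eigenvalues _ (hA ω) F hFsymm hFconvex
  · -- Jensen's inequality
    have hdi : Integrable (fun ω => d ω) (volume : Measure Ω) := by
      have : (fun ω => d ω) = fun ω => ∑ i : Fin m, (d ω i) • (Pi.single i 1 : Fin m → ℝ) := by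
        funext ω j
        simp [Finset.sum_apply, Pi.single_apply]
      rw [this]
      exact integrable_finset_sum _ fun i _ => (hint_d i).smul_const _
    have hμeq : μ = ∫ ω, d ω := by
      funext i
      rw [hμ i]
      have := (ContinuousLinearMap.proj i : (Fin m → ℝ) →L[ℝ] ℝ).integral_comp_comm hdi
      simpa using this
    rw [hμeq]
    exact hFconvex.map_integral_le (hFconvex.continuousOn isOpen_univ) isClosed_univ
      (Filter.Eventually.of_forall fun ω => Set.mem_univ _) hdi hint_Fd
end
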